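/- The map h : (C₀ × ℂ) → ℂ⁴ defined by h((0,t³,t⁵), a) = (a, t³, t⁵, a·t²) for t ≠ 0 and h((0,0,0), a) = (a,0,0,0), where C₀ = {(0,t³,t⁵) : t ∈ ℂ} ⊂ ℂ³, is a well-defined continuous bijection from C₀ × ℂ onto the image S of n(a,t) = (a,t³,t⁵,at²), whose inverse is also continuous; i.e., h is a homeomorphism exhibiting S as topologically trivial over the a-axis. -/

import Mathlib

noncomputable section

/-- The special fiber C₀ = {(0,t³,t⁵) : t ∈ ℂ} ⊂ ℂ³ of the surface
S = {(a,t³,t⁵,a·t²) : a,t ∈ ℂ} ⊂ ℂ⁴. -/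
def C₀ : Set (Fin 3 → ℂ) := {v | ∃ t : ℂ, v = ![0, t ^ 3, t ^ 5]}

/-- The surface S ⊂ ℂ⁴ parametrized by n(a,t) = (a, t³, t⁵, a·t²). -/
def Surf : Set (Fin 4 → ℂ) := {v | ∃ a t : ℂ, v = ![a, t ^ 3, t ^ 5, a * t ^ 2]}

/-- Auxiliary: recover t² from (0, t³, t⁵). -/
def φ (v : Fin 3 → ℂ) : ℂ := if v 1 = 0 then 0 else v 2 / v 1

lemma φ_eq (t : ℂ) : φ ![0, t ^ 3, t ^ 5] = t ^ 2 := by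
  by_cases h : t = 0
  · simp [φ, h]
  · have h3 : t ^ 3 ≠ 0 := pow_ne_zero _ h
    simp only [φ, Matrix.cons_val_one, Matrix.head_cons, if_neg h3]
    have : (![0, t ^ 3, t ^ 5] : Fin 3 → ℂ) 2 = t ^ 5 := rfl
    rw [this]
    simp only [Matrix.cons_val_zero, h3, ↓reduceIte]
    field_simp

lemma contφ : ContinuousOn φ C₀ := by
  intro v hv
  obtain ⟨t, rfl⟩ := hv
  by_cases ht : t = 0
  · subst ht
    have hval : φ ![(0:ℂ) ^ 1, 0 ^ 3, 0 ^ 5] = 0 := by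
      simp [φ]
    rw [ContinuousWithinAt]
    have h0 : φ ![(0:ℂ), 0 ^ 3, 0 ^ 5] = 0 := by simp [φ]
    rw [h0]
    apply squeeze_zero_norm' (a := fun w : Fin 3 → ℂ => ‖w 1‖ ^ ((2:ℝ)/3))
    · filter_upwards [self_mem_nhdsWithin] with w hw
      obtain ⟨s, rfl⟩ := hw
      rw [φ_eq]
      have h1 : (![0, s ^ 3, s ^ 5] : Fin 3 → ℂ) 1 = s ^ 3 := rfl
      rw [h1, norm_pow, norm_pow, ← Real.rpow_natCast ‖s‖ 3,
        ← Real.rpow_mul (norm_nonneg s)]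
      norm_num
    · have hc : Continuous fun w : Fin 3 → ℂ => ‖w 1‖ ^ ((2:ℝ)/3) := by
        apply Continuous.rpow_const
        · exact (continuous_apply 1).norm
        · intro x; right; norm_num
      have := hc.continuousWithinAt (s := C₀) (x := ![(0:ℂ), 0 ^ 3, 0 ^ 5])
      rw [ContinuousWithinAt] at this
      convert this using 2
      simp [Real.zero_rpow]
  · apply ContinuousAt.continuousWithinAt
    have hne : (![0, t ^ 3, t ^ 5] : Fin 3 → ℂ) 1 ≠ 0 := by
      simpa using pow_ne_zero 3 ht
    have hopen : IsOpen {w : Fin 3 → ℂ | w 1 ≠ 0} :=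
      isOpen_compl_singleton.preimage (continuous_apply 1)
    have hc : ContinuousAt (fun w : Fin 3 → ℂ => w 2 / w 1) ![0, t ^ 3, t ^ 5] :=
      ContinuousAt.div (continuous_apply 2).continuousAt
        (continuous_apply 1).continuousAt hne
    apply hc.congr
    filter_upwards [hopen.mem_nhds hne] with w hw
    exact (if_neg hw).symm

def hFun (p : C₀ × ℂ) : Fin 4 → ℂ := ![p.2, p.1.1 1, p.1.1 2, p.2 * φ p.1.1]

lemma hFun_mem (p : C₀ × ℂ) : hFun p ∈ Surf := by
  obtain ⟨⟨v, t, rfl⟩, a⟩ := p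
  refine ⟨a, t, ?_⟩
  funext i
  fin_cases i <;> simp [hFun, φ_eq]

def gFun (s : Surf) : C₀ × ℂ :=
  (⟨![0, s.1 1, s.1 2], by
      obtain ⟨a, t, ht⟩ := s.2
      refine ⟨t, ?_⟩
      rw [ht]
      funext i
      fin_cases i <;> simp⟩, s.1 0)

def hEquiv : (C₀ × ℂ) ≃ Surf where
  toFun p := ⟨hFun p, hFun_mem p⟩
  invFun := gFun
  left_inv p := by
    obtain ⟨⟨v, hv⟩, a⟩ := p
    obtain ⟨t, rfl⟩ := hv
    refine Prod.ext (Subtype.ext ?_) ?_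
    · funext i
      fin_cases i <;> simp [gFun, hFun]
    · simp [gFun, hFun]
  right_inv s := by
    obtain ⟨v, hv⟩ := s
    obtain ⟨a, t, rfl⟩ := hv
    refine Subtype.ext ?_
    funext i
    fin_cases i <;> simp [gFun, hFun, φ_eq]

lemma contφ' : Continuous fun p : C₀ × ℂ => φ p.1.1 :=
  contφ.comp_continuous (continuous_subtype_val.comp continuous_fst)
    fun p => p.1.2

def hHomeo : (C₀ × ℂ) ≃ₜ Surf where
  toEquiv := hEquiv
  continuous_toFun := by
    apply Continuous.subtype_mk
    apply continuous_pi
    intro i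
    fin_cases i
    · exact continuous_snd
    · show Continuous fun p : C₀ × ℂ => (p.1 : Fin 3 → ℂ) 1
      exact (continuous_apply 1).comp (continuous_subtype_val.comp continuous_fst)
    · show Continuous fun p : C₀ × ℂ => (p.1 : Fin 3 → ℂ) 2
      exact (continuous_apply 2).comp (continuous_subtype_val.comp continuous_fst)
    · show Continuous fun p : C₀ × ℂ => p.2 * φ (p.1 : Fin 3 → ℂ)
      exact continuous_snd.mul contφ'
  continuous_invFun := by
    apply Continuous.prodMk
    · apply Continuous.subtype_mk
      apply continuous_pi
      intro i
      fin_cases i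
      · exact continuous_const
      · show Continuous fun s : Surf => (s : Fin 4 → ℂ) 1
        exact (continuous_apply 1).comp continuous_subtype_val
      · show Continuous fun s : Surf => (s : Fin 4 → ℂ) 2
        exact (continuous_apply 2).comp continuous_subtype_val
    · exact (continuous_apply 0).comp continuous_subtype_val

end

/-- The map h : C₀ × ℂ → S, ((0,t³,t⁵), a) ↦ (a, t³, t⁵, a·t²), is a
well-defined homeomorphism onto S which commutes with the projections to the
a-coordinate: S is topologically trivial over the a-axis. -/
theorem topologically_trivial_family :
    ∃ h : (C₀ × ℂ) ≃ₜ Surf,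
      (∀ (t a : ℂ),
        (h (⟨![0, t ^ 3, t ^ 5], ⟨t, rfl⟩⟩, a) : Fin 4 → ℂ)
          = ![a, t ^ 3, t ^ 5, a * t ^ 2]) ∧
      (∀ p : C₀ × ℂ, (h p : Fin 4 → ℂ) 0 = p.2) := by
  refine ⟨hHomeo, fun t a => ?_, fun p => rfl⟩
  show hFun _ = _
  funext i
  fin_cases i <;> simp [hFun, φ_eq]
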